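/- Let N ≥ 2 and j ∈ {1,…,N}. Let v ∈ L²_loc(ℝ^N; ℝ) have a weak gradient ∇v ∈ L²(ℝ^N; ℝ^N), that is, ∫ v ∂_kχ dx = −∫ (∇v)_k χ dx for every χ ∈ C_c^∞(ℝ^N) and every k = 1,…,N. If the j-th weak partial derivative ∂_j v = (∇v)_j belongs to L¹(ℝ^N), then ∫_{ℝ^N} ∂_j v dx = 0. -/

import Mathlib

open MeasureTheory Filter Complex Metric
open scoped ENNReal Topology ComplexConjugate

noncomputable section
/-- `g` is the `j`-th weak partial derivative of the real-valued function `v`. -/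
def IsWeakDerivR {N : ℕ} (j : Fin N) (v g : (Fin N → ℝ) → ℝ) : Prop :=
  ∀ χ : (Fin N → ℝ) → ℝ, ContDiff ℝ (⊤ : ℕ∞) χ → HasCompactSupport χ →
    ∫ x, v x * fderiv ℝ χ x (Pi.single j 1) = -∫ x, g x * χ x
/-- `v ∈ L²_loc(ℝ^N;ℝ)`. -/
def L2loc {N : ℕ} (v : (Fin N → ℝ) → ℝ) : Prop :=
  ∀ K : Set (Fin N → ℝ), IsCompact K → IntegrableOn (fun x => (v x) ^ 2) K volume
/-- Integration by parts / symmetry of second derivatives: the weak gradient is curl-free. -/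
lemma weak_curl_free {N : ℕ} (v : (Fin N → ℝ) → ℝ) (g : (Fin N → ℝ) → Fin N → ℝ)
    (hgrad : ∀ k, IsWeakDerivR k v (fun x => g x k)) (j k : Fin N)
    (ψ : (Fin N → ℝ) → ℝ) (hψ : ContDiff ℝ (⊤ : ℕ∞) ψ) (hψc : HasCompactSupport ψ) :
    ∫ x, g x j * fderiv ℝ ψ x (Pi.single k 1) = ∫ x, g x k * fderiv ℝ ψ x (Pi.single j 1) := by
  have hd : ContDiff ℝ (⊤ : ℕ∞) (fderiv ℝ ψ) := hψ.fderiv_right (by exact_mod_cast le_top)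
  have hχ : ∀ w : Fin N → ℝ, ContDiff ℝ (⊤ : ℕ∞) (fun x => fderiv ℝ ψ x w) :=
    fun w => hd.clm_apply contDiff_const
  have hχc : ∀ w : Fin N → ℝ, HasCompactSupport (fun x => fderiv ℝ ψ x w) := by
    intro w
    exact (hψc.fderiv ℝ).comp_left (g := fun L : (Fin N → ℝ) →L[ℝ] ℝ => L w) rfl
  have key : ∀ x u w, fderiv ℝ (fun y => fderiv ℝ ψ y w) x u = fderiv ℝ (fderiv ℝ ψ) x u w := by
    intro x u w
    rw [fderiv_clm_apply ((hd.differentiable (by simp)) x)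
      (differentiableAt_const w)]
    simp
  have symm : ∀ x, ∀ u w, fderiv ℝ (fderiv ℝ ψ) x u w = fderiv ℝ (fderiv ℝ ψ) x w u := by
    intro x
    exact (hψ.contDiffAt).isSymmSndFDerivAt (by simp; exact (WithTop.coe_le_coe.2 le_top : ((2:ℕ∞) : WithTop ℕ∞) ≤ _))
  have e1 := hgrad j (fun x => fderiv ℝ ψ x (Pi.single k 1)) (hχ _) (hχc _)
  have e2 := hgrad k (fun x => fderiv ℝ ψ x (Pi.single j 1)) (hχ _) (hχc _)
  have e0 : ∀ x, fderiv ℝ (fun y => fderiv ℝ ψ y (Pi.single k 1)) x (Pi.single j 1)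
      = fderiv ℝ (fun y => fderiv ℝ ψ y (Pi.single j 1)) x (Pi.single k 1) := by
    intro x; rw [key, key, symm]
  have e3 : ∫ x, v x * fderiv ℝ (fun x => fderiv ℝ ψ x (Pi.single k 1)) x (Pi.single j 1)
      = ∫ x, v x * fderiv ℝ (fun x => fderiv ℝ ψ x (Pi.single j 1)) x (Pi.single k 1) := by
    congr 1; funext x; rw [e0 x]
  rw [e3, e2] at e1
  exact neg_injective e1.symm

set_option maxHeartbeats 2000000 in
/-- (Lemma `lema-int`.)  For `N ≥ 2`, if `v ∈ L²_loc(ℝ^N;ℝ)` has a weak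
gradient in `L²(ℝ^N;ℝ^N)` and its `j`-th weak partial derivative is integrable, then
`∫ ∂_j v dx = 0`. -/
theorem statement18 {N : ℕ} (hN : 2 ≤ N) (j : Fin N)
    (v : (Fin N → ℝ) → ℝ) (g : (Fin N → ℝ) → Fin N → ℝ)
    (hv : L2loc v)
    (hgrad : ∀ k, IsWeakDerivR k v (fun x => g x k))
    (hgL2 : ∀ k, MemLp (fun x => g x k) 2 volume)
    (hjL1 : Integrable (fun x => g x j) volume) :
    ∫ x, g x j = 0 := by
  classical
  haveI : Nontrivial (Fin N) := by
    constructor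
    exact ⟨⟨0, by omega⟩, ⟨1, by omega⟩, by simp [Fin.ext_iff]⟩
  obtain ⟨k, hkj⟩ := exists_ne j
  -- the bump function
  set Ψ : ContDiffBump (0 : Fin N → ℝ) := ⟨1, 2, one_pos, one_lt_two⟩ with hΨdef
  have hΨcd : ContDiff ℝ (⊤ : ℕ∞) (fun y => Ψ y) := Ψ.contDiff
  have hΨdiff : Differentiable ℝ (fun y => Ψ y) := hΨcd.differentiable (by simp)
  have hcontfder : Continuous (fderiv ℝ (fun y => Ψ y)) :=
    hΨcd.continuous_fderiv (by simp)
  obtain ⟨C, hC⟩ := hcontfder.bounded_above_of_compact_support (Ψ.hasCompactSupport.fderiv ℝ)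
  set C0 : ℝ := max C 1 with hC0def
  have hC0pos : 0 < C0 := lt_of_lt_of_le one_pos (le_max_right _ _)
  have hC0 : ∀ y, ‖fderiv ℝ (fun y => Ψ y) y‖ ≤ C0 := fun y => (hC y).trans (le_max_left _ _)
  -- basic bump facts
  have hΨ_one : ∀ y : Fin N → ℝ, ‖y‖ ≤ 1 → Ψ y = 1 := by
    intro y hy
    exact Ψ.one_of_mem_closedBall (by simpa [mem_closedBall, dist_zero_right] using hy)
  have hΨ_bd : ∀ y : Fin N → ℝ, ‖Ψ y‖ ≤ 1 := by
    intro y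
    rw [Real.norm_eq_abs, abs_le]
    exact ⟨by linarith [Ψ.nonneg' y], Ψ.le_one⟩
  have hΨ_supp : ∀ y : Fin N → ℝ, Ψ y ≠ 0 → ‖y‖ ≤ 2 := by
    intro y hy
    have h1 := Ψ.support_eq ▸ Function.mem_support.2 hy
    have h2 : ‖y‖ < 2 := by simpa [hΨdef, mem_ball, dist_zero_right] using h1
    exact h2.le
  have hfder_supp : ∀ y : Fin N → ℝ, fderiv ℝ (fun y => Ψ y) y ≠ 0 → ‖y‖ ≤ 2 := by
    intro y hy
    have h1 : y ∈ tsupport (fderiv ℝ (fun y => Ψ y)) := subset_tsupport _ (Function.mem_support.2 hy)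
    have h2 := (tsupport_fderiv_subset ℝ).trans (le_of_eq Ψ.tsupport_eq) h1
    simpa [hΨdef, mem_closedBall, dist_zero_right] using h2
  have hfder_zero : ∀ y : Fin N → ℝ, ‖y‖ < 1 → fderiv ℝ (fun y => Ψ y) y = 0 := by
    intro y hy
    have h1 : (fun y => Ψ y) =ᶠ[𝓝 y] fun _ => 1 :=
      Ψ.eventuallyEq_one_of_mem_ball (by simpa [mem_ball, dist_zero_right] using hy)
    rw [h1.fderiv_eq]
    exact fderiv_const_apply 1
  have hsingle : ∀ i : Fin N, ‖(Pi.single i (1:ℝ) : Fin N → ℝ)‖ ≤ 1 := by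
    intro i
    refine (pi_norm_le_iff_of_nonneg zero_le_one).2 fun i' => ?_
    rcases eq_or_ne i' i with h | h
    · subst h; simp
    · simp [Pi.single_eq_of_ne h]
  have hfder_apply_bd : ∀ (y : Fin N → ℝ) (i : Fin N),
      |fderiv ℝ (fun y => Ψ y) y (Pi.single i 1)| ≤ C0 := by
    intro y i
    calc |fderiv ℝ (fun y => Ψ y) y (Pi.single i 1)|
        ≤ ‖fderiv ℝ (fun y => Ψ y) y‖ * ‖(Pi.single i (1:ℝ) : Fin N → ℝ)‖ :=
          (fderiv ℝ (fun y => Ψ y) y).le_opNorm _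
      _ ≤ C0 * 1 := mul_le_mul (hC0 y) (hsingle i) (norm_nonneg _) hC0pos.le
      _ = C0 := mul_one _
  -- scales
  set sc : ℕ → ℝ := fun n => (n : ℝ) + 1 with hscdef
  set T : ℕ → ℝ := fun n => ((n : ℝ) + 1) ^ (2 * N) with hTdef
  have hs1 : ∀ n, 1 ≤ sc n := fun n => by
    simp only [hscdef]; exact le_add_of_nonneg_left (Nat.cast_nonneg n)
  have hspos : ∀ n, 0 < sc n := fun n => lt_of_lt_of_le one_pos (hs1 n)
  have hTs : ∀ n, T n = sc n ^ (2 * N) := fun n => rfl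
  have hT1 : ∀ n, 1 ≤ T n := fun n => one_le_pow₀ (hs1 n)
  have hTpos : ∀ n, 0 < T n := fun n => lt_of_lt_of_le one_pos (hT1 n)
  set c : ℕ → Fin N → ℝ := fun n i => if i = j then T n else sc n with hcdef
  have hcpos : ∀ n i, 0 < c n i := by
    intro n i; by_cases h : i = j <;> simp only [hcdef, h, if_pos, if_neg, if_true]
    · simp [hTpos n]
    · simp [h, hspos n]
  have hsc_le_c : ∀ n i, sc n ≤ c n i := by
    intro n i; by_cases h : i = j
    · simp only [hcdef, h, if_pos rfl, hTs]
      exact le_self_pow₀ (hs1 n) (by omega)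
    · simp [hcdef, h]
  have hck : ∀ n, c n k = sc n := fun n => by simp [hcdef, hkj]
  -- the anisotropic rescaling maps
  set A : ℕ → (Fin N → ℝ) →L[ℝ] (Fin N → ℝ) :=
    fun n => ContinuousLinearMap.pi (fun i => (c n i)⁻¹ • ContinuousLinearMap.proj i) with hAdef
  have hAapp : ∀ n (x : Fin N → ℝ) i, A n x i = (c n i)⁻¹ * x i := by
    intro n x i; simp [hAdef]
  have hAle : ∀ n (x : Fin N → ℝ), ‖A n x‖ ≤ (sc n)⁻¹ * ‖x‖ := by
    intro n x
    refine (pi_norm_le_iff_of_nonneg (by positivity)).2 fun i => ?_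
    rw [hAapp, Real.norm_eq_abs, abs_mul, abs_inv, abs_of_pos (hcpos n i)]
    have h1 : (c n i)⁻¹ ≤ (sc n)⁻¹ := by
      apply inv_anti₀ (hspos n) (hsc_le_c n i)
    have h2 : |x i| ≤ ‖x‖ := norm_le_pi_norm x i
    exact mul_le_mul h1 h2 (abs_nonneg _) (by positivity)
  have hcomp : ∀ n (x : Fin N → ℝ) i, |x i| ≤ c n i * ‖A n x‖ := by
    intro n x i
    have h1 : |A n x i| ≤ ‖A n x‖ := norm_le_pi_norm (A n x) i
    rw [hAapp] at h1
    have h2 : |x i| = c n i * |(c n i)⁻¹ * x i| := by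
      rw [abs_mul, abs_inv, abs_of_pos (hcpos n i), ← mul_assoc,
        mul_inv_cancel₀ (hcpos n i).ne', one_mul]
    rw [h2]
    exact mul_le_mul_of_nonneg_left h1 (hcpos n i).le
  -- derivative of the test function ψₙ(x) = x k * Ψ (A n x)
  have hHas : ∀ n (x : Fin N → ℝ), HasFDerivAt (fun y => y k * Ψ (A n y))
      (x k • ((fderiv ℝ (fun y => Ψ y) (A n x)).comp (A n))
        + Ψ (A n x) • (ContinuousLinearMap.proj k : (Fin N → ℝ) →L[ℝ] ℝ)) x := by
    intro n x
    have h1 : HasFDerivAt (fun y : Fin N → ℝ => y k)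
        (ContinuousLinearMap.proj k : (Fin N → ℝ) →L[ℝ] ℝ) x :=
      (ContinuousLinearMap.proj k : (Fin N → ℝ) →L[ℝ] ℝ).hasFDerivAt
    have h2 : HasFDerivAt (fun y => Ψ (A n y))
        ((fderiv ℝ (fun y => Ψ y) (A n x)).comp (A n)) x :=
      ((hΨdiff (A n x)).hasFDerivAt).comp x ((A n).hasFDerivAt)
    exact h1.mul h2
  have hAsingle : ∀ n i, A n (Pi.single i 1) = (c n i)⁻¹ • (Pi.single i (1:ℝ) : Fin N → ℝ) := by
    intro n i
    funext i'
    rcases eq_or_ne i' i with h | h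
    · subst h; rw [hAapp]; simp
    · rw [hAapp]; simp [Pi.single_eq_of_ne h]
  have hfdj : ∀ n (x : Fin N → ℝ), fderiv ℝ (fun y => y k * Ψ (A n y)) x (Pi.single j 1)
      = x k * ((T n)⁻¹ * fderiv ℝ (fun y => Ψ y) (A n x) (Pi.single j 1)) := by
    intro n x
    rw [(hHas n x).fderiv]
    simp only [ContinuousLinearMap.add_apply, ContinuousLinearMap.smul_apply,
      ContinuousLinearMap.coe_comp', Function.comp_apply, ContinuousLinearMap.proj_apply,
      smul_eq_mul, hAsingle n j, ContinuousLinearMap.map_smul]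
    rw [Pi.single_eq_of_ne hkj]
    have hcj : c n j = T n := by simp [hcdef]
    rw [hcj]
    ring
  have hfdk : ∀ n (x : Fin N → ℝ), fderiv ℝ (fun y => y k * Ψ (A n y)) x (Pi.single k 1)
      = g x j * 0 + (Ψ (A n x) + x k * ((sc n)⁻¹ * fderiv ℝ (fun y => Ψ y) (A n x) (Pi.single k 1))) := by
    intro n x
    rw [(hHas n x).fderiv]
    simp only [ContinuousLinearMap.add_apply, ContinuousLinearMap.smul_apply,
      ContinuousLinearMap.coe_comp', Function.comp_apply, ContinuousLinearMap.proj_apply,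
      smul_eq_mul, hAsingle n k, ContinuousLinearMap.map_smul]
    rw [Pi.single_eq_same, hck n]
    ring
  -- the support box
  set box : ℕ → Set (Fin N → ℝ) :=
    fun n => Set.Icc (fun i => -(2 * c n i)) (fun i => 2 * c n i) with hboxdef
  have hbox_mem : ∀ n (x : Fin N → ℝ), ‖A n x‖ ≤ 2 → x ∈ box n := by
    intro n x hx
    rw [hboxdef, Set.mem_Icc]
    constructor <;> intro i
    · have h1 := (hcomp n x i).trans
        (mul_le_mul_of_nonneg_left hx (hcpos n i).le)
      have h3 := (abs_le.1 (h1.trans (le_of_eq (mul_comm _ _)))).1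
      show -(2 * c n i) ≤ x i
      linarith
    · have h1 := (hcomp n x i).trans
        (mul_le_mul_of_nonneg_left hx (hcpos n i).le)
      have h3 := (abs_le.1 (h1.trans (le_of_eq (mul_comm _ _)))).2
      show x i ≤ 2 * c n i
      linarith
  have hbox_compact : ∀ n, IsCompact (box n) := fun n => isCompact_Icc
  have hbox_meas : ∀ n, MeasurableSet (box n) := fun n => measurableSet_Icc
  have hΨ_out : ∀ n (x : Fin N → ℝ), x ∉ box n → Ψ (A n x) = 0 := by
    intro n x hx
    by_contra h
    exact hx (hbox_mem n x (hΨ_supp _ h))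
  have hfder_out : ∀ n (x : Fin N → ℝ), x ∉ box n → fderiv ℝ (fun y => Ψ y) (A n x) = 0 := by
    intro n x hx
    by_contra h
    exact hx (hbox_mem n x (hfder_supp _ h))
  -- smoothness and compact support of ψₙ
  have hψs : ∀ n, ContDiff ℝ (⊤ : ℕ∞) (fun y : Fin N → ℝ => y k * Ψ (A n y)) := by
    intro n
    exact ((ContinuousLinearMap.proj k : (Fin N → ℝ) →L[ℝ] ℝ).contDiff).mul
      (hΨcd.comp (A n).contDiff)
  have hψc : ∀ n, HasCompactSupport (fun y : Fin N → ℝ => y k * Ψ (A n y)) := by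
    intro n
    apply HasCompactSupport.intro (hbox_compact n)
    intro x hx
    rw [hΨ_out n x hx, mul_zero]
  -- global bounds
  have hb_bd : ∀ n (x : Fin N → ℝ),
      |x k * ((sc n)⁻¹ * fderiv ℝ (fun y => Ψ y) (A n x) (Pi.single k 1))| ≤ 2 * C0 := by
    intro n x
    by_cases hD : fderiv ℝ (fun y => Ψ y) (A n x) = 0
    · rw [hD]; simp; positivity
    · have h2 : ‖A n x‖ ≤ 2 := hfder_supp _ hD
      have hxk : |x k| * (sc n)⁻¹ ≤ 2 := by
        have := (hcomp n x k).trans (mul_le_mul_of_nonneg_left h2 (hcpos n k).le)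
        rw [hck n] at this
        rw [← div_eq_mul_inv, div_le_iff₀ (hspos n)]
        linarith
      calc |x k * ((sc n)⁻¹ * fderiv ℝ (fun y => Ψ y) (A n x) (Pi.single k 1))|
          = (|x k| * (sc n)⁻¹) * |fderiv ℝ (fun y => Ψ y) (A n x) (Pi.single k 1)| := by
            rw [abs_mul, abs_mul, abs_inv, abs_of_pos (hspos n)]; ring
        _ ≤ 2 * C0 := mul_le_mul hxk (hfder_apply_bd _ _) (abs_nonneg _)
            (by norm_num)
  have hh_bd : ∀ n (x : Fin N → ℝ),
      |x k * ((T n)⁻¹ * fderiv ℝ (fun y => Ψ y) (A n x) (Pi.single j 1))|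
        ≤ 2 * sc n * (T n)⁻¹ * C0 := by
    intro n x
    by_cases hD : fderiv ℝ (fun y => Ψ y) (A n x) = 0
    · rw [hD]; simp; positivity
    · have h2 : ‖A n x‖ ≤ 2 := hfder_supp _ hD
      have hxk : |x k| ≤ 2 * sc n := by
        have := (hcomp n x k).trans (mul_le_mul_of_nonneg_left h2 (hcpos n k).le)
        rw [hck n] at this
        linarith [this]
      calc |x k * ((T n)⁻¹ * fderiv ℝ (fun y => Ψ y) (A n x) (Pi.single j 1))|
          = |x k| * (T n)⁻¹ * |fderiv ℝ (fun y => Ψ y) (A n x) (Pi.single j 1)| := by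
            rw [abs_mul, abs_mul, abs_inv, abs_of_pos (hTpos n)]; ring
        _ ≤ (2 * sc n) * (T n)⁻¹ * C0 := by
            apply mul_le_mul _ (hfder_apply_bd _ _) (abs_nonneg _)
            · positivity
            · exact mul_le_mul_of_nonneg_right hxk (by positivity)
        _ = 2 * sc n * (T n)⁻¹ * C0 := by ring
  -- measurability / integrability of the pieces
  have hcontD : ∀ n, Continuous fun x : Fin N → ℝ => fderiv ℝ (fun y => Ψ y) (A n x) :=
    fun n => hcontfder.comp (A n).continuous
  have hcontb : ∀ n i, Continuous fun x : Fin N → ℝ =>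
      x k * ((sc n)⁻¹ * fderiv ℝ (fun y => Ψ y) (A n x) (Pi.single i 1)) := by
    intro n i
    exact (continuous_apply k).mul (continuous_const.mul
      ((hcontD n).clm_apply continuous_const))
  have hconth : ∀ n i, Continuous fun x : Fin N → ℝ =>
      x k * ((T n)⁻¹ * fderiv ℝ (fun y => Ψ y) (A n x) (Pi.single i 1)) := by
    intro n i
    exact (continuous_apply k).mul (continuous_const.mul
      ((hcontD n).clm_apply continuous_const))
  have intΦ : ∀ n, Integrable (fun x => g x j * Ψ (A n x)) volume := by
    intro n
    have h1 := hjL1.bdd_mul (Ψ.continuous.comp (A n).continuous).aestronglyMeasurable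
      (Eventually.of_forall fun x => hΨ_bd _)
    exact h1.congr (Eventually.of_forall fun x => mul_comm _ _)
  have intb : ∀ n, Integrable (fun x =>
      g x j * (x k * ((sc n)⁻¹ * fderiv ℝ (fun y => Ψ y) (A n x) (Pi.single k 1)))) volume := by
    intro n
    have h1 := hjL1.bdd_mul (hcontb n k).aestronglyMeasurable (c := 2 * C0) (Eventually.of_forall fun x => hb_bd n x)
    exact h1.congr (Eventually.of_forall fun x => mul_comm _ _)
  -- the integral identity coming from symmetry of second derivatives
  have hiden : ∀ n, ∫ x, g x j * Ψ (A n x) =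
      (∫ x, g x k * (x k * ((T n)⁻¹ * fderiv ℝ (fun y => Ψ y) (A n x) (Pi.single j 1))))
        - ∫ x, g x j * (x k * ((sc n)⁻¹ * fderiv ℝ (fun y => Ψ y) (A n x) (Pi.single k 1))) := by
    intro n
    have E := weak_curl_free v g hgrad j k _ (hψs n) (hψc n)
    have e1 : (fun x => g x j * fderiv ℝ (fun y => y k * Ψ (A n y)) x (Pi.single k 1))
        = fun x => g x j * Ψ (A n x)
          + g x j * (x k * ((sc n)⁻¹ * fderiv ℝ (fun y => Ψ y) (A n x) (Pi.single k 1))) := by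
      funext x; rw [hfdk n x]; ring
    have e2 : (fun x => g x k * fderiv ℝ (fun y => y k * Ψ (A n y)) x (Pi.single j 1))
        = fun x => g x k * (x k * ((T n)⁻¹ * fderiv ℝ (fun y => Ψ y) (A n x) (Pi.single j 1))) := by
      funext x; rw [hfdj n x]
    rw [e1, e2, integral_add (intΦ n) (intb n)] at E
    linarith [E]
  -- Limit 1 : ∫ g_j Φ_n → ∫ g_j
  have hAx_small : ∀ x : Fin N → ℝ, ∀ᶠ n in atTop, ‖A n x‖ < 1 := by
    intro x
    filter_upwards [eventually_ge_atTop ⌈‖x‖⌉₊] with n hn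
    have hx_lt : ‖x‖ < sc n := by
      have h1 : ‖x‖ ≤ (⌈‖x‖⌉₊ : ℝ) := Nat.le_ceil _
      have h2 : ((⌈‖x‖⌉₊ : ℕ) : ℝ) ≤ (n : ℝ) := by exact_mod_cast hn
      have : sc n = (n : ℝ) + 1 := rfl
      linarith
    calc ‖A n x‖ ≤ (sc n)⁻¹ * ‖x‖ := hAle n x
      _ < 1 := by
        rw [← div_eq_inv_mul]
        exact (div_lt_one (hspos n)).2 hx_lt
  have L1 : Tendsto (fun n => ∫ x, g x j * Ψ (A n x)) atTop (𝓝 (∫ x, g x j)) := by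
    apply tendsto_integral_of_dominated_convergence (fun x => |g x j|)
    · exact fun n => (intΦ n).aestronglyMeasurable
    · exact hjL1.abs
    · intro n
      refine Eventually.of_forall fun x => ?_
      rw [Real.norm_eq_abs, abs_mul]
      calc |g x j| * |Ψ (A n x)| ≤ |g x j| * 1 :=
          mul_le_mul_of_nonneg_left (hΨ_bd _) (abs_nonneg _)
        _ = |g x j| := mul_one _
    · refine Eventually.of_forall fun x => ?_
      apply Tendsto.congr' _ tendsto_const_nhds
      filter_upwards [hAx_small x] with n hn
      rw [hΨ_one _ hn.le, mul_one]
  -- Limit 2 : ∫ g_j b_n → 0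
  have L2 : Tendsto (fun n => ∫ x,
      g x j * (x k * ((sc n)⁻¹ * fderiv ℝ (fun y => Ψ y) (A n x) (Pi.single k 1)))) atTop
      (𝓝 0) := by
    have h0 : Tendsto (fun n => ∫ x,
        g x j * (x k * ((sc n)⁻¹ * fderiv ℝ (fun y => Ψ y) (A n x) (Pi.single k 1)))) atTop
        (𝓝 (∫ _ : Fin N → ℝ, (0:ℝ))) := by
      apply tendsto_integral_of_dominated_convergence (fun x => |g x j| * (2 * C0))
      · exact fun n => (intb n).aestronglyMeasurable
      · exact hjL1.abs.mul_const _
      · intro n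
        refine Eventually.of_forall fun x => ?_
        rw [Real.norm_eq_abs, abs_mul]
        exact mul_le_mul_of_nonneg_left (hb_bd n x) (abs_nonneg _)
      · refine Eventually.of_forall fun x => ?_
        apply Tendsto.congr' _ tendsto_const_nhds
        filter_upwards [hAx_small x] with n hn
        rw [hfder_zero _ hn]
        simp
    simpa using h0
  -- Limit 3 : ∫ g_k h_n → 0 via Cauchy-Schwarz
  obtain ⟨p, hp⟩ : ∃ p, N = p + 1 := ⟨N - 1, by omega⟩
  have hmemh : ∀ n, MemLp (fun x : Fin N → ℝ =>
      x k * ((T n)⁻¹ * fderiv ℝ (fun y => Ψ y) (A n x) (Pi.single j 1))) 2 volume := by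
    intro n
    apply Continuous.memLp_of_hasCompactSupport (hconth n j)
    apply HasCompactSupport.intro (hbox_compact n)
    intro x hx
    rw [hfder_out n x hx]
    simp
  have hprodc : ∀ n, ∏ i, c n i = T n * sc n ^ p := by
    intro n
    rw [← Finset.mul_prod_erase Finset.univ _ (Finset.mem_univ j)]
    congr 1
    · simp [hcdef]
    · rw [Finset.prod_congr rfl (fun i hi => ?_), Finset.prod_const,
        Finset.card_erase_of_mem (Finset.mem_univ j), Finset.card_univ, Fintype.card_fin]
      · congr 1
        omega
      · simp [hcdef, Finset.ne_of_mem_erase hi]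
  have hvol : ∀ n, (volume (box n)).toReal = 4 ^ N * (T n * sc n ^ p) := by
    intro n
    rw [hboxdef]
    rw [Real.volume_Icc_pi_toReal (fun i => by
      have := hcpos n i
      dsimp only
      linarith)]
    rw [Finset.prod_congr rfl (fun i _ => (by ring : 2 * c n i - -(2 * c n i) = 4 * c n i)),
      Finset.prod_mul_distrib, Finset.prod_const, Finset.card_univ, Fintype.card_fin, hprodc n]
  have hIn : ∀ n, ∫ x : Fin N → ℝ,
      ‖x k * ((T n)⁻¹ * fderiv ℝ (fun y => Ψ y) (A n x) (Pi.single j 1))‖ ^ (2:ℝ)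
      ≤ (4:ℝ) ^ (N+1) * C0 ^ 2 / sc n := by
    intro n
    set M : ℝ := 2 * sc n * (T n)⁻¹ * C0 with hMdef
    have hM0 : 0 ≤ M := by positivity
    have hint2 : Integrable (fun x : Fin N → ℝ =>
        ‖x k * ((T n)⁻¹ * fderiv ℝ (fun y => Ψ y) (A n x) (Pi.single j 1))‖ ^ (2:ℝ)) volume := by
      simpa using (hmemh n).integrable_norm_rpow (by norm_num) (by norm_num)
    have hintInd : Integrable ((box n).indicator fun _ => M ^ (2:ℝ)) volume :=
      (integrable_indicator_iff (hbox_meas n)).2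
        (integrableOn_const ((hbox_compact n).measure_lt_top.ne))
    have hle : ∀ x : Fin N → ℝ,
        ‖x k * ((T n)⁻¹ * fderiv ℝ (fun y => Ψ y) (A n x) (Pi.single j 1))‖ ^ (2:ℝ)
        ≤ (box n).indicator (fun _ => M ^ (2:ℝ)) x := by
      intro x
      by_cases hx : x ∈ box n
      · rw [Set.indicator_of_mem hx]
        exact Real.rpow_le_rpow (norm_nonneg _)
          ((Real.norm_eq_abs _) ▸ (hh_bd n x)) (by norm_num)
      · rw [Set.indicator_of_notMem hx, hfder_out n x hx]
        simp [Real.zero_rpow]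
    have h4 := integral_mono hint2 hintInd hle
    rw [integral_indicator_const _ (hbox_meas n), smul_eq_mul, measureReal_def, hvol n] at h4
    refine h4.trans ?_
    -- numeric estimate
    have ha1 : 1 ≤ sc n := hs1 n
    have ha0 : 0 < sc n := hspos n
    have hb : T n = sc n ^ (2 * N) := hTs n
    have hM2 : M ^ (2:ℝ) = M ^ (2:ℕ) := by
      rw [show (2:ℝ) = ((2:ℕ):ℝ) by norm_num, Real.rpow_natCast]
    rw [hM2, hMdef, hb]
    have key : (4:ℝ) ^ N * (sc n ^ (2 * N) * sc n ^ p) * (2 * sc n * (sc n ^ (2 * N))⁻¹ * C0) ^ (2:ℕ)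
        = 4 ^ (N+1) * C0 ^ 2 * (sc n ^ (p + 2) / sc n ^ (2 * N)) := by
      field_simp
      ring
    rw [key]
    have h5 : sc n ^ (p + 2) / sc n ^ (2 * N) ≤ 1 / sc n := by
      rw [div_le_div_iff₀ (by positivity) ha0]
      calc sc n ^ (p + 2) * sc n = sc n ^ (p + 3) := by ring
        _ ≤ sc n ^ (2 * N) := pow_le_pow_right₀ ha1 (by omega)
        _ = 1 * sc n ^ (2 * N) := (one_mul _).symm
    calc (4:ℝ) ^ (N+1) * C0 ^ 2 * (sc n ^ (p + 2) / sc n ^ (2 * N))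
        ≤ 4 ^ (N+1) * C0 ^ 2 * (1 / sc n) :=
          mul_le_mul_of_nonneg_left h5 (by positivity)
      _ = 4 ^ (N+1) * C0 ^ 2 / sc n := by ring
  -- Cauchy–Schwarz bound
  set Gk : ℝ := (∫ x, ‖g x k‖ ^ (2:ℝ)) ^ ((1:ℝ)/2) with hGkdef
  have hGk0 : 0 ≤ Gk :=
    Real.rpow_nonneg (integral_nonneg fun x => Real.rpow_nonneg (norm_nonneg _) _) _
  have habs : ∀ n, |∫ x, g x k *
      (x k * ((T n)⁻¹ * fderiv ℝ (fun y => Ψ y) (A n x) (Pi.single j 1)))|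
      ≤ Gk * ((4:ℝ) ^ (N+1) * C0 ^ 2 / sc n) ^ ((1:ℝ)/2) := by
    intro n
    have hpq : Real.HolderConjugate 2 2 := Real.HolderConjugate.two_two
    have h2e : ENNReal.ofReal (2:ℝ) = 2 := by
      rw [show (2:ℝ) = ((2:ℕ):ℝ) by norm_num, ENNReal.ofReal_natCast]
      norm_num
    have h1 : |∫ x, g x k *
        (x k * ((T n)⁻¹ * fderiv ℝ (fun y => Ψ y) (A n x) (Pi.single j 1)))|
        ≤ ∫ x, ‖g x k‖ *
          ‖x k * ((T n)⁻¹ * fderiv ℝ (fun y => Ψ y) (A n x) (Pi.single j 1))‖ := by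
      rw [← Real.norm_eq_abs]
      refine (norm_integral_le_integral_norm _).trans (le_of_eq ?_)
      congr 1
      funext x
      rw [norm_mul]
    have h2 := integral_mul_norm_le_Lp_mul_Lq hpq (h2e ▸ hgL2 k) (h2e ▸ hmemh n)
    have h3 : (∫ x : Fin N → ℝ,
        ‖x k * ((T n)⁻¹ * fderiv ℝ (fun y => Ψ y) (A n x) (Pi.single j 1))‖ ^ (2:ℝ)) ^ ((1:ℝ)/2)
        ≤ ((4:ℝ) ^ (N+1) * C0 ^ 2 / sc n) ^ ((1:ℝ)/2) :=
      Real.rpow_le_rpow (integral_nonneg fun x => Real.rpow_nonneg (norm_nonneg _) _)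
        (hIn n) (by norm_num)
    refine h1.trans (h2.trans ?_)
    exact mul_le_mul_of_nonneg_left h3 hGk0
  -- the bound tends to zero
  have hrhs : Tendsto (fun n => Gk * ((4:ℝ) ^ (N+1) * C0 ^ 2 / sc n) ^ ((1:ℝ)/2)) atTop (𝓝 0) := by
    have t0 : Tendsto sc atTop atTop := by
      rw [hscdef]
      exact tendsto_atTop_add_const_right atTop 1 tendsto_natCast_atTop_atTop
    have t1 : Tendsto (fun n => (4:ℝ) ^ (N+1) * C0 ^ 2 / sc n) atTop (𝓝 0) :=
      Tendsto.div_atTop tendsto_const_nhds t0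
    have t2 := ((Real.continuousAt_rpow_const 0 ((1:ℝ)/2) (Or.inr (by norm_num))).tendsto).comp t1
    have t3 : Tendsto (fun n => ((4:ℝ) ^ (N+1) * C0 ^ 2 / sc n) ^ ((1:ℝ)/2)) atTop (𝓝 0) := by
      have : ((0:ℝ)) ^ ((1:ℝ)/2) = 0 := Real.zero_rpow (by norm_num)
      rw [← this]
      exact t2
    have t4 := t3.const_mul Gk
    simpa using t4
  have L3 : Tendsto (fun n => ∫ x, g x k *
      (x k * ((T n)⁻¹ * fderiv ℝ (fun y => Ψ y) (A n x) (Pi.single j 1)))) atTop (𝓝 0) := by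
    rw [tendsto_zero_iff_abs_tendsto_zero]
    exact squeeze_zero (fun n => abs_nonneg _) habs hrhs
  -- conclusion
  have L4 : Tendsto (fun n => ∫ x, g x j * Ψ (A n x)) atTop (𝓝 0) := by
    have h := L3.sub L2
    rw [sub_zero] at h
    exact h.congr fun n => (hiden n).symm
  exact tendsto_nhds_unique L1 L4
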